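/- Let B ⊆ F_q be maximal with B - B ⊆ Q ∪ {0}, s = |B|, s even and s = ⌊√q⌋, where q ≡ 1 (mod 4) with q not a perfect square. Then there exists t ∉ B with φ(t) ≤ -2, where φ(t) = Σ_{b∈B} χ(b - t). -/
import Mathlib


open scoped Classical

/-- The quadratic character: 0 at 0, 1 on nonzero squares, -1 on non-squares. -/
noncomputable def quadChar {F : Type*} [Field F] (x : F) : ℤ :=
  if x = 0 then 0 else if IsSquare x then 1 else -1

lemma quadChar_eq_quadraticChar {F : Type*} [Field F] [Fintype F] [DecidableEq F] (x : F) :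
    quadChar x = quadraticChar F x := by
  rw [quadraticChar_apply, quadraticCharFun]
  unfold quadChar
  split_ifs <;> rfl

theorem stmt_12 {F : Type*} [Field F] [Fintype F]
    (hq : Fintype.card F % 4 = 1)
    (hns : ¬ ∃ n : ℕ, n ^ 2 = Fintype.card F)
    (B : Finset F)
    (hB : ∀ b₁ ∈ B, ∀ b₂ ∈ B, b₁ ≠ b₂ → b₁ - b₂ ≠ 0 ∧ IsSquare (b₁ - b₂))
    (hmax : ∀ C : Finset F,
      (∀ c₁ ∈ C, ∀ c₂ ∈ C, c₁ ≠ c₂ → c₁ - c₂ ≠ 0 ∧ IsSquare (c₁ - c₂)) →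
      B ⊆ C → C = B)
    (hcard : B.card = Nat.sqrt (Fintype.card F)) (hpar : Even B.card) :
    ∃ t : F, t ∉ B ∧ ∑ b ∈ B, quadChar (b - t) ≤ -2 := by
  classical
  have hchar : ringChar F ≠ 2 := by
    intro h
    have := FiniteField.even_card_of_char_two h
    omega
  have hsumF : ∑ x : F, quadChar x = 0 := by
    simp_rw [quadChar_eq_quadraticChar]
    exact quadraticChar_sum_zero hchar
  have hsumb : ∀ b : F, ∑ t : F, quadChar (b - t) = 0 := by
    intro b
    rw [← hsumF]
    exact Fintype.sum_equiv (Equiv.subLeft b) _ _ (fun t => rfl)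
  set f : F → ℤ := fun t => ∑ b ∈ B, quadChar (b - t) with hf
  have htot : ∑ t : F, f t = 0 := by
    simp only [hf]
    rw [Finset.sum_comm]
    simp [hsumb]
  have hinB : ∀ t ∈ B, f t = (B.card : ℤ) - 1 := by
    intro t ht
    have h0 : quadChar ((t : F) - t) = 0 := by simp [quadChar]
    rw [hf]
    simp only
    rw [← Finset.add_sum_erase B _ ht, h0, zero_add]
    have : ∀ b ∈ B.erase t, quadChar (b - t) = 1 := by
      intro b hb
      obtain ⟨hne, hsq⟩ := hB b (Finset.mem_of_mem_erase hb) t ht (Finset.ne_of_mem_erase hb)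
      simp [quadChar, hne, hsq]
    rw [Finset.sum_congr rfl this, Finset.sum_const, Finset.card_erase_of_mem ht, nsmul_eq_mul, mul_one]
    have h1 : 1 ≤ B.card := Finset.one_le_card.mpr ⟨t, ht⟩
    omega
  have hs2 : 2 ≤ B.card := by
    have hq1 : 0 < Fintype.card F := Fintype.card_pos
    have : B.card ≠ 0 := by
      rw [hcard]
      intro h
      have := Nat.sqrt_eq_zero.mp h
      omega
    obtain ⟨k, hk⟩ := hpar
    omega
  have h1 : ∑ t ∈ B, f t = (B.card : ℤ) * ((B.card : ℤ) - 1) := by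
    rw [Finset.sum_congr rfl hinB, Finset.sum_const, nsmul_eq_mul]
  have h2 := Finset.sum_compl_add_sum B f
  rw [htot, h1] at h2
  have hneg : ∑ t ∈ Bᶜ, f t < 0 := by
    have : (2:ℤ) ≤ (B.card : ℤ) := by exact_mod_cast hs2
    nlinarith
  have hex : ∃ t ∈ Bᶜ, f t < 0 := by
    by_contra h
    push_neg at h
    have : (0:ℤ) ≤ ∑ t ∈ Bᶜ, f t := Finset.sum_nonneg h
    linarith
  obtain ⟨t, htc, htlt⟩ := hex
  have htB : t ∉ B := Finset.mem_compl.mp htc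
  refine ⟨t, htB, ?_⟩
  have heven : Even (f t) := by
    have hpm : ∀ b ∈ B, Even (quadChar (b - t) + 1) := by
      intro b hb
      have hne : b - t ≠ 0 := sub_ne_zero.mpr (by rintro rfl; exact htB hb)
      by_cases h : IsSquare (b - t)
      · simp [quadChar, hne, h]
      · simp [quadChar, hne, h]
    have hEsum : Even (∑ b ∈ B, (quadChar (b - t) + 1)) := Finset.even_sum (fun b => quadChar (b - t) + 1) hpm
    have hsplit : ∑ b ∈ B, (quadChar (b - t) + 1) = f t + (B.card : ℤ) := by
      rw [Finset.sum_add_distrib, Finset.sum_const, nsmul_eq_mul, mul_one, hf]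
    rw [hsplit] at hEsum
    have hcE : Even ((B.card : ℤ)) := by exact_mod_cast hpar.natCast (α := ℤ)
    obtain ⟨a, ha⟩ := hEsum
    obtain ⟨c, hc⟩ := hcE
    exact ⟨a - c, by omega⟩
  obtain ⟨a, ha⟩ := heven
  show f t ≤ -2
  omega
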